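/- For every ε > 0 there exists L > 0 such that for every multiindex α ∈ ℕ³ with |α| ≥ 1, the α-th partial derivative of the function f(x) = 1/|x| on ℝ³ satisfies the bound sup_{|x| > ε} |∂^α f(x)| ≤ L^{|α|+1} · |α|!. -/

import Mathlib

/-- Partial derivative in the `i`-th coordinate direction of `ℝ³`. -/
noncomputable def pderiv3 (i : Fin 3) (f : EuclideanSpace ℝ (Fin 3) → ℝ) :
    EuclideanSpace ℝ (Fin 3) → ℝ :=
  fun x => fderiv ℝ f x (EuclideanSpace.single i 1)

/-- Iterated partial derivative `∂^α` for a multiindex `α ∈ ℕ³`. -/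
noncomputable def pderivMulti (α : Fin 3 → ℕ) (f : EuclideanSpace ℝ (Fin 3) → ℝ) :
    EuclideanSpace ℝ (Fin 3) → ℝ :=
  ((pderiv3 0)^[α 0] ∘ (pderiv3 1)^[α 1] ∘ (pderiv3 2)^[α 2]) f

open Real Finset Filter Topology

noncomputable section
namespace CoulombAux

abbrev E3 := EuclideanSpace ℝ (Fin 3)

def q3 (x : E3) : ℝ := ∑ j, x j ^ 2

def qd3 (x : E3) : E3 →L[ℝ] ℝ := ∑ j, (2 * x j) • EuclideanSpace.proj j

lemma q3_eq (x : E3) : q3 x = ‖x‖ ^ 2 := by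
  rw [EuclideanSpace.norm_eq, Real.sq_sqrt (by positivity)]
  simp [q3, sq_abs]

lemma q3_pos {x : E3} (hx : x ≠ 0) : 0 < q3 x := by
  rw [q3_eq]
  have := norm_pos_iff.2 hx
  positivity

lemma hasFDerivAt_q3 (x : E3) : HasFDerivAt q3 (qd3 x) x := by
  have : ∀ j ∈ (univ : Finset (Fin 3)), HasFDerivAt (fun y : E3 => y j ^ 2)
      ((2 * x j) • EuclideanSpace.proj (𝕜 := ℝ) j) x := by
    intro j _
    have h1 : HasDerivAt (fun t : ℝ => t ^ 2) (2 * x j) (x j) := by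
      simpa using hasDerivAt_pow 2 (x j)
    have h2 : HasFDerivAt (fun y : E3 => y j) (EuclideanSpace.proj (𝕜 := ℝ) j) x :=
      (EuclideanSpace.proj (𝕜 := ℝ) j).hasFDerivAt
    exact h1.comp_hasFDerivAt x h2
  exact HasFDerivAt.fun_sum this


def ex (n : ℕ) (β : Fin 3 → ℕ) : ℝ := -((n : ℝ) + 1 + ∑ j, (β j : ℝ)) / 2

def term (n : ℕ) (t : ℝ × (Fin 3 → ℕ)) (x : E3) : ℝ :=
  t.1 * ((∏ j, x j ^ t.2 j) * q3 x ^ ex n t.2)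

def monD (β : Fin 3 → ℕ) (x : E3) : E3 →L[ℝ] ℝ :=
  ∑ j, ((∏ k ∈ univ.erase j, x k ^ β k) * ((β j : ℝ) * x j ^ (β j - 1))) • EuclideanSpace.proj j

lemma hasFDerivAt_mon (β : Fin 3 → ℕ) (x : E3) :
    HasFDerivAt (fun y : E3 => ∏ j, y j ^ β j) (monD β x) x := by
  have h : ∀ j ∈ (univ : Finset (Fin 3)), HasFDerivAt (fun y : E3 => y j ^ β j)
      (((β j : ℝ) * x j ^ (β j - 1)) • EuclideanSpace.proj (𝕜 := ℝ) j) x := by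
    intro j _
    have h1 : HasDerivAt (fun t : ℝ => t ^ β j) ((β j : ℝ) * x j ^ (β j - 1)) (x j) :=
      hasDerivAt_pow (β j) (x j)
    have h2 : HasFDerivAt (fun y : E3 => y j) (EuclideanSpace.proj (𝕜 := ℝ) j) x :=
      (EuclideanSpace.proj (𝕜 := ℝ) j).hasFDerivAt
    exact h1.comp_hasFDerivAt x h2
  have := HasFDerivAt.finset_prod h
  simpa [monD, smul_smul] using this

def termD (n : ℕ) (t : ℝ × (Fin 3 → ℕ)) (x : E3) : E3 →L[ℝ] ℝ :=
  t.1 • ((∏ j, x j ^ t.2 j) • ((ex n t.2 * q3 x ^ (ex n t.2 - 1)) • qd3 x)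
    + q3 x ^ ex n t.2 • monD t.2 x)

lemma hasFDerivAt_term (n : ℕ) (t : ℝ × (Fin 3 → ℕ)) {x : E3} (hx : x ≠ 0) :
    HasFDerivAt (term n t) (termD n t x) x := by
  have hq := hasFDerivAt_q3 x
  have hr : HasDerivAt (fun y : ℝ => y ^ ex n t.2)
      (ex n t.2 * q3 x ^ (ex n t.2 - 1)) (q3 x) :=
    Real.hasDerivAt_rpow_const (Or.inl (q3_pos hx).ne')
  have hR : HasFDerivAt (fun y : E3 => q3 y ^ ex n t.2)
      ((ex n t.2 * q3 x ^ (ex n t.2 - 1)) • qd3 x) x := hr.comp_hasFDerivAt x hq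
  have hM := hasFDerivAt_mon t.2 x
  exact ((hM.mul hR).const_mul t.1)

lemma qd3_apply (x : E3) (i : Fin 3) : qd3 x (EuclideanSpace.single i 1) = 2 * x i := by
  simp [qd3, ContinuousLinearMap.sum_apply, EuclideanSpace.single_apply]

lemma monD_apply (β : Fin 3 → ℕ) (x : E3) (i : Fin 3) :
    monD β x (EuclideanSpace.single i 1)
      = (∏ k ∈ univ.erase i, x k ^ β k) * ((β i : ℝ) * x i ^ (β i - 1)) := by
  simp [monD, ContinuousLinearMap.sum_apply, EuclideanSpace.single_apply]

lemma termD_apply (n : ℕ) (t : ℝ × (Fin 3 → ℕ)) (x : E3) (i : Fin 3) :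
    termD n t x (EuclideanSpace.single i 1)
      = t.1 * ((∏ j, x j ^ t.2 j) * ((ex n t.2 * q3 x ^ (ex n t.2 - 1)) * (2 * x i))
        + q3 x ^ ex n t.2 * ((∏ k ∈ univ.erase i, x k ^ t.2 k)
            * ((t.2 i : ℝ) * x i ^ (t.2 i - 1)))) := by
  simp [termD, qd3_apply, monD_apply, smul_eq_mul, mul_assoc, mul_add]


def Amap (i : Fin 3) (t : ℝ × (Fin 3 → ℕ)) : ℝ × (Fin 3 → ℕ) :=
  ((t.2 i : ℝ) * t.1, Function.update t.2 i (t.2 i - 1))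

def Bmap (i : Fin 3) (n : ℕ) (t : ℝ × (Fin 3 → ℕ)) : ℝ × (Fin 3 → ℕ) :=
  (-((n : ℝ) + 1 + ∑ j, (t.2 j : ℝ)) * t.1, Function.update t.2 i (t.2 i + 1))

lemma sum_cast_update (β : Fin 3 → ℕ) (i : Fin 3) (v : ℕ) :
    ∑ j, ((Function.update β i v) j : ℝ) = (v : ℝ) + ∑ k ∈ univ.erase i, (β k : ℝ) := by
  rw [← Finset.add_sum_erase _ _ (mem_univ i)]
  simp only [Function.update_self]
  congr 1
  exact Finset.sum_congr rfl fun k hk => by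
    rw [Function.update_of_ne (Finset.ne_of_mem_erase hk)]

lemma prod_pow_update (x : E3) (β : Fin 3 → ℕ) (i : Fin 3) (v : ℕ) :
    ∏ j, x j ^ (Function.update β i v) j = x i ^ v * ∏ k ∈ univ.erase i, x k ^ β k := by
  rw [← Finset.mul_prod_erase _ _ (mem_univ i)]
  simp only [Function.update_self]
  congr 1
  exact Finset.prod_congr rfl fun k hk => by
    rw [Function.update_of_ne (Finset.ne_of_mem_erase hk)]

lemma sum_cast_split (β : Fin 3 → ℕ) (i : Fin 3) :
    ∑ j, (β j : ℝ) = (β i : ℝ) + ∑ k ∈ univ.erase i, (β k : ℝ) :=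
  (Finset.add_sum_erase _ _ (mem_univ i)).symm

lemma prod_pow_split (x : E3) (β : Fin 3 → ℕ) (i : Fin 3) :
    ∏ j, x j ^ β j = x i ^ β i * ∏ k ∈ univ.erase i, x k ^ β k :=
  (Finset.mul_prod_erase _ _ (mem_univ i)).symm

lemma key (n : ℕ) (t : ℝ × (Fin 3 → ℕ)) {x : E3} (hx : x ≠ 0) (i : Fin 3) :
    termD n t x (EuclideanSpace.single i 1)
      = term (n + 1) (Amap i t) x + term (n + 1) (Bmap i n t) x := by
  obtain ⟨c, β⟩ := t
  have hQ : 0 < q3 x := q3_pos hx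
  rw [termD_apply]
  have hB : term (n + 1) (Bmap i n ⟨c, β⟩) x
      = c * ((∏ j, x j ^ β j) * ((ex n β * q3 x ^ (ex n β - 1)) * (2 * x i))) := by
    simp only [term, Bmap, ex]
    rw [sum_cast_update, prod_pow_update]
    have hexp : -(((n + 1 : ℕ) : ℝ) + 1 + (((β i + 1 : ℕ) : ℝ) + ∑ k ∈ univ.erase i, (β k : ℝ))) / 2
        = -((n : ℝ) + 1 + ∑ j, (β j : ℝ)) / 2 - 1 := by
      rw [sum_cast_split β i]; push_cast; ring
    rw [hexp]
    rw [prod_pow_split x β i, pow_succ]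
    ring
  have hA : term (n + 1) (Amap i ⟨c, β⟩) x
      = c * (q3 x ^ ex n β * ((∏ k ∈ univ.erase i, x k ^ β k)
          * ((β i : ℝ) * x i ^ (β i - 1)))) := by
    simp only [term, Amap, ex]
    rcases Nat.eq_zero_or_pos (β i) with h0 | h1
    · simp [h0]
    · rw [sum_cast_update, prod_pow_update]
      have hexp : -(((n + 1 : ℕ) : ℝ) + 1 + (((β i - 1 : ℕ) : ℝ) + ∑ k ∈ univ.erase i, (β k : ℝ))) / 2
          = -((n : ℝ) + 1 + ∑ j, (β j : ℝ)) / 2 := by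
        rw [sum_cast_split β i, Nat.cast_sub h1]; push_cast; ring
      rw [hexp]
      ring
  rw [hA, hB]; ring


def S (n : ℕ) (m : Multiset (ℝ × (Fin 3 → ℕ))) (x : E3) : ℝ :=
  (m.map fun t => term n t x).sum

lemma hasFDerivAt_S (n : ℕ) (m : Multiset (ℝ × (Fin 3 → ℕ))) {x : E3} (hx : x ≠ 0) :
    HasFDerivAt (fun y => S n m y) ((m.map fun t => termD n t x)).sum x := by
  induction m using Multiset.induction_on with
  | empty => simpa [S] using hasFDerivAt_const (0 : ℝ) x
  | cons t m ih =>
    simp only [S, Multiset.map_cons, Multiset.sum_cons] at ih ⊢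
    exact (hasFDerivAt_term n t hx).add ih

lemma sum_CLM_apply (m : Multiset (ℝ × (Fin 3 → ℕ))) (f : ℝ × (Fin 3 → ℕ) → E3 →L[ℝ] ℝ)
    (v : E3) : ((m.map f).sum) v = (m.map fun t => f t v).sum := by
  induction m using Multiset.induction_on with
  | empty => simp
  | cons t m ih => simp [ih]

def Pred (n : ℕ) (g : E3 → ℝ) : Prop :=
  ∃ m : Multiset (ℝ × (Fin 3 → ℕ)),
    (∀ t ∈ m, ∑ j, t.2 j ≤ n) ∧
    (m.map fun t => |t.1|).sum ≤ 4 ^ n * (n.factorial : ℝ) ∧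
    ∀ x : E3, x ≠ 0 → g x = S n m x

lemma Pred.step {n : ℕ} {g : E3 → ℝ} (h : Pred n g) (i : Fin 3) :
    Pred (n + 1) (pderiv3 i g) := by
  obtain ⟨m, hdeg, hmass, heq⟩ := h
  refine ⟨m.map (Amap i) + m.map (Bmap i n), ?_, ?_, ?_⟩
  · intro t ht
    rcases Multiset.mem_add.1 ht with ht | ht <;>
      obtain ⟨u, hu, rfl⟩ := Multiset.mem_map.1 ht
    · have h1 : ∑ j, (Amap i u).2 j ≤ ∑ j, u.2 j := by
        apply Finset.sum_le_sum
        intro j _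
        rcases eq_or_ne j i with rfl | hji
        · simp only [Amap, Function.update_self]; omega
        · simp [Amap, Function.update_of_ne hji]
      exact h1.trans ((hdeg u hu).trans (Nat.le_succ n))
    · have h1 : ∑ j, (Bmap i n u).2 j ≤ (∑ j, u.2 j) + 1 := by
        simp only [Bmap]
        rw [← Finset.add_sum_erase _ _ (mem_univ i), ← Finset.add_sum_erase _ (fun j => u.2 j)
          (mem_univ i), Function.update_self]
        have : ∑ k ∈ univ.erase i, Function.update u.2 i (u.2 i + 1) k
            = ∑ k ∈ univ.erase i, u.2 k :=
          Finset.sum_congr rfl fun k hk => by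
            rw [Function.update_of_ne (Finset.ne_of_mem_erase hk)]
        omega
      have := hdeg u hu
      omega
  · rw [Multiset.map_add, Multiset.sum_add, Multiset.map_map, Multiset.map_map]
    have hle : ((m.map fun t => |(Amap i t).1|).sum + (m.map fun t => |(Bmap i n t).1|).sum)
        ≤ (m.map fun t => (3 * (n : ℝ) + 1) * |t.1|).sum := by
      rw [← Multiset.sum_map_add]
      apply Multiset.sum_map_le_sum_map
      intro t ht
      have hβ : ((t.2 i : ℝ)) ≤ (n : ℝ) := by
        have h1 : t.2 i ≤ ∑ j, t.2 j := Finset.single_le_sum (fun j _ => Nat.zero_le _)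
          (mem_univ i)
        exact_mod_cast h1.trans (hdeg t ht)
      have hsum2 : (∑ j, (t.2 j : ℝ)) ≤ (n : ℝ) := by exact_mod_cast hdeg t ht
      have hB : |(Bmap i n t).1| = ((n:ℝ) + 1 + ∑ j, (t.2 j : ℝ)) * |t.1| := by
        have hpos : 0 ≤ (n:ℝ) + 1 + ∑ j, (t.2 j : ℝ) := by positivity
        simp only [Bmap, abs_mul, abs_neg, abs_of_nonneg hpos]
      have hA : |(Amap i t).1| = (t.2 i : ℝ) * |t.1| := by
        simp [Amap, abs_mul]
      rw [hA, hB]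
      have h0 : 0 ≤ |t.1| := abs_nonneg _
      have hc : (t.2 i : ℝ) + ((n:ℝ) + 1 + ∑ j, (t.2 j : ℝ)) ≤ 3 * (n:ℝ) + 1 := by linarith
      calc (t.2 i : ℝ) * |t.1| + ((n:ℝ) + 1 + ∑ j, (t.2 j : ℝ)) * |t.1|
          = ((t.2 i : ℝ) + ((n:ℝ) + 1 + ∑ j, (t.2 j : ℝ))) * |t.1| := by ring
        _ ≤ (3 * (n:ℝ) + 1) * |t.1| := mul_le_mul_of_nonneg_right hc h0
    rw [Multiset.sum_map_mul_left] at hle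
    simp only [Function.comp_def]
    refine hle.trans ?_
    calc (3 * (n : ℝ) + 1) * (m.map fun t => |t.1|).sum
        ≤ (3 * (n : ℝ) + 1) * (4 ^ n * (n.factorial : ℝ)) := by
          apply mul_le_mul_of_nonneg_left hmass; positivity
      _ ≤ 4 ^ (n + 1) * ((n + 1).factorial : ℝ) := by
          rw [Nat.factorial_succ]
          push_cast
          have h4 : (3*(n:ℝ)+1) ≤ 4*((n:ℝ)+1) := by
            have : (0:ℝ) ≤ (n:ℝ) := Nat.cast_nonneg n
            linarith
          calc (3 * (n : ℝ) + 1) * (4 ^ n * (n.factorial : ℝ))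
              ≤ 4*((n:ℝ)+1) * (4 ^ n * (n.factorial : ℝ)) :=
                mul_le_mul_of_nonneg_right h4 (by positivity)
            _ = 4 ^ (n+1) * (((n:ℝ)+1) * (n.factorial : ℝ)) := by ring
  · intro x hx
    have hev : g =ᶠ[𝓝 x] S n m := by
      filter_upwards [isOpen_compl_singleton.mem_nhds (by simpa using hx)] with y hy
      exact heq y hy
    have : pderiv3 i g x = ((m.map fun t => termD n t x)).sum (EuclideanSpace.single i 1) := by
      rw [pderiv3, hev.fderiv_eq, (hasFDerivAt_S n m hx).fderiv]
    rw [this, sum_CLM_apply]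
    have : (m.map fun t => termD n t x (EuclideanSpace.single i 1)).sum
        = (m.map fun t => term (n+1) (Amap i t) x + term (n+1) (Bmap i n t) x).sum := by
      congr 1
      exact Multiset.map_congr rfl fun t _ => key n t hx i
    rw [this, Multiset.sum_map_add, S, Multiset.map_add, Multiset.sum_add,
      Multiset.map_map, Multiset.map_map]
    simp only [Function.comp_def]


lemma Pred_base : Pred 0 (fun y : E3 => ‖y‖⁻¹) := by
  refine ⟨{(1, fun _ => 0)}, ?_, ?_, ?_⟩
  · intro t ht
    rw [Multiset.mem_singleton] at ht
    subst ht; simp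
  · simp
  · intro x hx
    have hn : (0:ℝ) < ‖x‖ := norm_pos_iff.2 hx
    simp only [S, Multiset.map_singleton, Multiset.sum_singleton, term, ex]
    simp only [pow_zero, prod_const_one, Nat.cast_zero, sum_const_zero, one_mul,
      Nat.cast_ofNat, CharP.cast_eq_zero]
    rw [q3_eq, ← Real.rpow_natCast ‖x‖ 2, ← Real.rpow_mul (norm_nonneg x)]
    norm_num
    rw [Real.rpow_neg_one]

lemma abs_coord_le (x : E3) (j : Fin 3) : |x j| ≤ ‖x‖ := by
  have h1 : x j ^ 2 ≤ q3 x :=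
    Finset.single_le_sum (f := fun k => x k ^ 2) (fun k _ => sq_nonneg _) (mem_univ j)
  rw [q3_eq] at h1
  calc |x j| = Real.sqrt (x j ^ 2) := (Real.sqrt_sq_eq_abs _).symm
    _ ≤ Real.sqrt (‖x‖ ^ 2) := Real.sqrt_le_sqrt h1
    _ = ‖x‖ := Real.sqrt_sq (norm_nonneg x)

lemma term_bound (n : ℕ) (t : ℝ × (Fin 3 → ℕ)) {x : E3} (hx : x ≠ 0) :
    |term n t x| ≤ |t.1| * (‖x‖ ^ (n + 1))⁻¹ := by
  have hn : (0:ℝ) < ‖x‖ := norm_pos_iff.2 hx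
  have hq0 : (0:ℝ) ≤ q3 x := (q3_pos hx).le
  have hq : q3 x ^ ex n t.2 = ‖x‖ ^ (2 * ex n t.2) := by
    rw [q3_eq, ← Real.rpow_natCast ‖x‖ 2, ← Real.rpow_mul (norm_nonneg x)]
    norm_num
  have hprod : |∏ j, x j ^ t.2 j| ≤ ‖x‖ ^ (∑ j, t.2 j) := by
    rw [Finset.abs_prod, ← Finset.prod_pow_eq_pow_sum]
    apply Finset.prod_le_prod (fun j _ => abs_nonneg _)
    intro j _
    rw [abs_pow]
    exact pow_le_pow_left₀ (abs_nonneg _) (abs_coord_le x j) _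
  have key2 : ‖x‖ ^ (∑ j, t.2 j) * q3 x ^ ex n t.2 = (‖x‖ ^ (n + 1))⁻¹ := by
    rw [hq, ← Real.rpow_natCast ‖x‖ (∑ j, t.2 j), ← Real.rpow_add hn]
    have hexp : ((∑ j, t.2 j : ℕ) : ℝ) + 2 * ex n t.2 = -(((n + 1 : ℕ) : ℝ)) := by
      simp only [ex]; push_cast; ring
    rw [hexp, Real.rpow_neg (norm_nonneg x), Real.rpow_natCast]
  have habs : |term n t x| = |t.1| * (|∏ j, x j ^ t.2 j| * q3 x ^ ex n t.2) := by
    rw [term, abs_mul, abs_mul, abs_of_nonneg (Real.rpow_nonneg hq0 _)]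
  rw [habs, ← key2]
  apply mul_le_mul_of_nonneg_left _ (abs_nonneg _)
  exact mul_le_mul_of_nonneg_right hprod (Real.rpow_nonneg hq0 _)

lemma abs_S_le (n : ℕ) (m : Multiset (ℝ × (Fin 3 → ℕ))) {x : E3} (hx : x ≠ 0) :
    |S n m x| ≤ (m.map fun t => |t.1|).sum * (‖x‖ ^ (n + 1))⁻¹ := by
  calc |S n m x| ≤ ((m.map fun t => term n t x).map abs).sum :=
        Multiset.abs_sum_le_sum_abs
    _ = (m.map fun t => |term n t x|).sum := by rw [Multiset.map_map]; rfl
    _ ≤ (m.map fun t => |t.1| * (‖x‖ ^ (n + 1))⁻¹).sum :=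
        Multiset.sum_map_le_sum_map _ _ fun t _ => term_bound n t hx
    _ = (m.map fun t => |t.1|).sum * (‖x‖ ^ (n + 1))⁻¹ := Multiset.sum_map_mul_right

lemma Pred.iterate {n : ℕ} {g : E3 → ℝ} (h : Pred n g) (i : Fin 3) (k : ℕ) :
    Pred (n + k) ((pderiv3 i)^[k] g) := by
  induction k with
  | zero => simpa using h
  | succ k ih =>
    rw [Function.iterate_succ_apply']
    exact ih.step i

lemma Pred_pderivMulti (α : Fin 3 → ℕ) :
    Pred (α 0 + α 1 + α 2) (pderivMulti α (fun y : E3 => ‖y‖⁻¹)) := by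
  have h2 := Pred_base.iterate 2 (α 2)
  have h1 := h2.iterate 1 (α 1)
  have h0 := h1.iterate 0 (α 0)
  have hidx : 0 + α 2 + α 1 + α 0 = α 0 + α 1 + α 2 := by omega
  rw [hidx] at h0
  exact h0


theorem coulomb_main (ε : ℝ) (hε : 0 < ε) :
    ∃ L > 0, ∀ α : Fin 3 → ℕ, 1 ≤ ∑ i, α i →
      ∀ x : EuclideanSpace ℝ (Fin 3), ε < ‖x‖ →
        |pderivMulti α (fun y => ‖y‖⁻¹) x|
          ≤ L ^ ((∑ i, α i) + 1) * Nat.factorial (∑ i, α i) := by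
  refine ⟨4 * max 1 ε⁻¹, by positivity, ?_⟩
  intro α _ x hx
  have hx0 : x ≠ 0 := by
    intro h
    rw [h, norm_zero] at hx
    linarith
  obtain ⟨m, hdeg, hmass, heq⟩ := Pred_pderivMulti α
  have hsum : α 0 + α 1 + α 2 = ∑ i, α i := (Fin.sum_univ_three α).symm
  rw [hsum] at hmass heq
  set N := ∑ i, α i with hN
  have hmono : (‖x‖ ^ (N + 1))⁻¹ ≤ (ε ^ (N + 1))⁻¹ := by
    gcongr
  calc |pderivMulti α (fun y => ‖y‖⁻¹) x| = |S N m x| := by rw [heq x hx0]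
    _ ≤ (m.map fun t => |t.1|).sum * (‖x‖ ^ (N + 1))⁻¹ := abs_S_le N m hx0
    _ ≤ (4 ^ N * (N.factorial : ℝ)) * (ε ^ (N + 1))⁻¹ := by
        apply mul_le_mul hmass hmono (by positivity)
        positivity
    _ = 4 ^ N * (ε⁻¹) ^ (N + 1) * (N.factorial : ℝ) := by
        rw [inv_pow]; ring
    _ ≤ 4 ^ (N + 1) * (max 1 ε⁻¹) ^ (N + 1) * (N.factorial : ℝ) := by
        have g1 : (4:ℝ) ^ N ≤ 4 ^ (N + 1) :=
          pow_le_pow_right₀ (by norm_num) (Nat.le_succ N)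
        have g2 : (ε⁻¹) ^ (N + 1) ≤ (max 1 ε⁻¹) ^ (N + 1) :=
          pow_le_pow_left₀ (inv_nonneg.2 hε.le) (le_max_right _ _) _
        have g3 : (4:ℝ) ^ N * (ε⁻¹) ^ (N + 1) ≤ 4 ^ (N + 1) * (max 1 ε⁻¹) ^ (N + 1) :=
          mul_le_mul g1 g2 (by positivity) (by positivity)
        exact mul_le_mul_of_nonneg_right g3 (by positivity)
    _ = (4 * max 1 ε⁻¹) ^ (N + 1) * (N.factorial : ℝ) := by rw [mul_pow]


end CoulombAux
end

/-- For every `ε > 0` there is `L > 0` such that for every multiindex `α` with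
`|α| ≥ 1`, `sup_{|x|>ε} |∂^α |x|⁻¹| ≤ L^{|α|+1} |α|!`. -/
theorem coulomb_derivative_bound (ε : ℝ) (hε : 0 < ε) :
    ∃ L > 0, ∀ α : Fin 3 → ℕ, 1 ≤ ∑ i, α i →
      ∀ x : EuclideanSpace ℝ (Fin 3), ε < ‖x‖ →
        |pderivMulti α (fun y => ‖y‖⁻¹) x|
          ≤ L ^ ((∑ i, α i) + 1) * Nat.factorial (∑ i, α i) := by
  exact CoulombAux.coulomb_main ε hε
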